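/- arXiv:0910.5880 — 2 statements merged into one kernel-verified Lean document; each statement's English description precedes it below -/
import Mathlib

section
/- Let g(x) = |x|^{-(d-α-λ)}·1_{|x|<1} with α+β+λ < d, λ > 0. Then there exists c > 0 such that for all x with 0 < |x| < 1/e, the weighted Riesz potential v(x) = |x|^{-β} ∫ g(y)|y|^{-α}|x-y|^{-λ} dy satisfies v(x) ≥ c · |x|^{-β} · log(1/|x|). -/
open MeasureTheory Metric Real

section Aux

open Set ENNReal Filter

lemma aux_integrableOn_rpow_ball (d : ℕ) {s R : ℝ} (hs0 : 0 < s) (hsd : s < d) :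
    IntegrableOn (fun y : EuclideanSpace ℝ (Fin d) => ‖y‖ ^ (-s)) (ball 0 R) volume := by
  have h_meas : Measurable fun y : EuclideanSpace ℝ (Fin d) => ‖y‖ ^ (-s) := by fun_prop
  refine ⟨h_meas.aestronglyMeasurable, ?_⟩
  have h_nn : ∀ y : EuclideanSpace ℝ (Fin d), 0 ≤ ‖y‖ ^ (-s) := fun y => rpow_nonneg (norm_nonneg y) _
  have hkey : (∫⁻ y in ball (0 : EuclideanSpace ℝ (Fin d)) R, ‖(‖y‖ ^ (-s))‖ₑ ∂volume) =
      ∫⁻ y in ball (0 : EuclideanSpace ℝ (Fin d)) R, ENNReal.ofReal (‖y‖ ^ (-s)) ∂volume :=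
    lintegral_enorm_of_nonneg fun y => h_nn y
  rw [HasFiniteIntegral, hkey,
    lintegral_eq_lintegral_meas_le _ (Filter.Eventually.of_forall h_nn) h_meas.aemeasurable]
  set μ := volume.restrict (ball (0 : EuclideanSpace ℝ (Fin d)) R)
  have hAm : ∀ t : ℝ, MeasurableSet {a : EuclideanSpace ℝ (Fin d) | t ≤ ‖a‖ ^ (-s)} := fun t =>
    measurableSet_le measurable_const h_meas
  calc
    ∫⁻ t in Ioi (0:ℝ), μ {a | t ≤ ‖a‖ ^ (-s)}
      ≤ ∫⁻ t in Ioc (0:ℝ) 1 ∪ Ioi 1, μ {a | t ≤ ‖a‖ ^ (-s)} :=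
        lintegral_mono_set Ioi_subset_Ioc_union_Ioi
    _ ≤ (∫⁻ t in Ioc (0:ℝ) 1, μ {a | t ≤ ‖a‖ ^ (-s)}) + ∫⁻ t in Ioi (1:ℝ), μ {a | t ≤ ‖a‖ ^ (-s)} :=
        lintegral_union_le _ _ _
    _ < ⊤ := ENNReal.add_lt_top.2 ⟨?_, ?_⟩
  · calc
      (∫⁻ t in Ioc (0:ℝ) 1, μ {a | t ≤ ‖a‖ ^ (-s)})
        ≤ ∫⁻ _ in Ioc (0:ℝ) 1, volume (ball (0 : EuclideanSpace ℝ (Fin d)) R) := by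
          refine setLIntegral_mono' measurableSet_Ioc fun t _ => ?_
          rw [Measure.restrict_apply (hAm t)]
          exact measure_mono inter_subset_right
      _ = volume (ball (0 : EuclideanSpace ℝ (Fin d)) R) * volume (Ioc (0:ℝ) 1) := by
          rw [setLIntegral_const]
      _ < ⊤ := by
          apply ENNReal.mul_lt_top measure_ball_lt_top
          simp [Real.volume_Ioc]
  · have hsub : ∀ t : ℝ, 1 < t → {a : EuclideanSpace ℝ (Fin d) | t ≤ ‖a‖ ^ (-s)} ⊆
        closedBall 0 (t ^ (-s)⁻¹) := by
      intro t ht a ha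
      simp only [mem_setOf_eq] at ha
      have hna : 0 < ‖a‖ := by
        by_contra h
        push_neg at h
        have : ‖a‖ = 0 := le_antisymm h (norm_nonneg a)
        rw [this, Real.zero_rpow (neg_ne_zero.mpr hs0.ne')] at ha
        linarith
      rw [mem_closedBall_zero_iff]
      exact (Real.le_rpow_inv_iff_of_neg hna (lt_trans one_pos ht) (by linarith : -s < 0)).2 ha
    have hcb : ∀ t : ℝ, 1 < t →
        μ {a : EuclideanSpace ℝ (Fin d) | t ≤ ‖a‖ ^ (-s)} ≤
        ENNReal.ofReal (t ^ ((-s)⁻¹ * d)) * volume (ball (0 : EuclideanSpace ℝ (Fin d)) 1) := by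
      intro t ht
      have h1 : μ {a : EuclideanSpace ℝ (Fin d) | t ≤ ‖a‖ ^ (-s)} ≤
          volume (closedBall (0 : EuclideanSpace ℝ (Fin d)) (t ^ (-s)⁻¹)) := by
        rw [Measure.restrict_apply (hAm t)]
        exact measure_mono (inter_subset_left.trans (hsub t ht))
      refine h1.trans (le_of_eq ?_)
      rw [Measure.addHaar_closedBall _ _ (rpow_nonneg (by linarith : (0:ℝ) ≤ t) _)]
      congr 2
      rw [finrank_euclideanSpace_fin, ← Real.rpow_natCast (t ^ (-s)⁻¹) d,
        ← Real.rpow_mul (by linarith : (0:ℝ) ≤ t)]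
    calc
      (∫⁻ t in Ioi (1:ℝ), μ {a | t ≤ ‖a‖ ^ (-s)})
        ≤ ∫⁻ t in Ioi (1:ℝ), ENNReal.ofReal (t ^ ((-s)⁻¹ * d)) *
            volume (ball (0 : EuclideanSpace ℝ (Fin d)) 1) :=
          setLIntegral_mono' measurableSet_Ioi fun t ht => hcb t ht
      _ = (∫⁻ t in Ioi (1:ℝ), ENNReal.ofReal (t ^ ((-s)⁻¹ * d))) *
            volume (ball (0 : EuclideanSpace ℝ (Fin d)) 1) :=
          lintegral_mul_const' _ _ measure_ball_lt_top.ne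
      _ < ⊤ := by
          apply ENNReal.mul_lt_top _ measure_ball_lt_top
          refine IntegrableOn.setLIntegral_lt_top ?_
          apply integrableOn_Ioi_rpow_of_lt _ one_pos
          have h1 : (1:ℝ) < (d:ℝ) / s := (one_lt_div hs0).2 hsd
          have h2 : (-s)⁻¹ * d = -((d:ℝ)/s) := by rw [inv_neg, div_eq_mul_inv]; ring
          rw [h2]
          linarith

lemma aux_polar_value (d : ℕ) (hd : 1 ≤ d) {a : ℝ} (ha0 : 0 < a) (ha1 : a < 1) :
    ∫ y : EuclideanSpace ℝ (Fin d),
        Set.indicator (Set.Ioo a 1) (fun t => t ^ (-(d:ℝ))) ‖y‖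
      = (d : ℝ) * (volume (ball (0 : EuclideanSpace ℝ (Fin d)) 1)).toReal * Real.log (1 / a) := by
  haveI : Nonempty (Fin d) := ⟨⟨0, hd⟩⟩
  haveI : Nontrivial (EuclideanSpace ℝ (Fin d)) := inferInstance
  rw [MeasureTheory.integral_fun_norm_addHaar volume
    (fun t => Set.indicator (Set.Ioo a 1) (fun t => t ^ (-(d:ℝ))) t)]
  rw [finrank_euclideanSpace_fin]
  have h1 : ∀ t : ℝ, t ^ (d - 1) • Set.indicator (Set.Ioo a 1) (fun t => t ^ (-(d:ℝ))) t
      = Set.indicator (Set.Ioo a 1) (fun t => t ^ (d - 1) * t ^ (-(d:ℝ))) t := by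
    intro t
    by_cases ht : t ∈ Set.Ioo a 1
    · rw [Set.indicator_of_mem ht, Set.indicator_of_mem ht, smul_eq_mul]
    · rw [Set.indicator_of_notMem ht, Set.indicator_of_notMem ht, smul_zero]
  simp only [h1]
  rw [setIntegral_indicator measurableSet_Ioo]
  have h2 : Set.Ioi (0:ℝ) ∩ Set.Ioo a 1 = Set.Ioo a 1 :=
    Set.inter_eq_right.mpr (fun t ht => lt_trans ha0 ht.1)
  rw [h2]
  have h3 : ∀ t ∈ Set.Ioo a 1, t ^ (d - 1) * t ^ (-(d:ℝ)) = t⁻¹ := by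
    intro t ht
    have ht0 : 0 < t := lt_trans ha0 ht.1
    rw [← Real.rpow_natCast t (d - 1), ← Real.rpow_add ht0, ← Real.rpow_neg_one t]
    congr 1
    have hc : ((d - 1 : ℕ) : ℝ) = (d : ℝ) - 1 := by
      push_cast [Nat.cast_sub hd]
      ring
    rw [hc]
    ring
  rw [setIntegral_congr_fun measurableSet_Ioo h3]
  rw [← MeasureTheory.integral_Ioc_eq_integral_Ioo,
    ← intervalIntegral.integral_of_le ha1.le, integral_inv_of_pos ha0 one_pos]
  rw [nsmul_eq_mul, smul_eq_mul]
  rw [measureReal_def]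
  ring

lemma aux_ind_integrable (d : ℕ) {a : ℝ} (ha0 : 0 < a) :
    Integrable (fun y : EuclideanSpace ℝ (Fin d) =>
      Set.indicator (Set.Ioo a 1) (fun t => t ^ (-(d:ℝ))) ‖y‖) volume := by
  have hmeas : Measurable (fun y : EuclideanSpace ℝ (Fin d) =>
      Set.indicator (Set.Ioo a 1) (fun t => t ^ (-(d:ℝ))) ‖y‖) := by
    apply Measurable.comp (g := Set.indicator (Set.Ioo a 1) (fun t => t ^ (-(d:ℝ))))
    · exact Measurable.indicator (by fun_prop) measurableSet_Ioo
    · exact measurable_norm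
  have hbd : Integrable (Set.indicator (ball (0 : EuclideanSpace ℝ (Fin d)) 1)
      (fun _ => a ^ (-(d:ℝ)))) volume := by
    apply MeasureTheory.IntegrableOn.integrable_indicator _ measurableSet_ball
    exact integrableOn_const measure_ball_lt_top.ne
  refine hbd.mono' hmeas.aestronglyMeasurable (Filter.Eventually.of_forall fun y => ?_)
  by_cases hy : ‖y‖ ∈ Set.Ioo a 1
  · rw [Set.indicator_of_mem hy]
    have hyb : y ∈ ball (0 : EuclideanSpace ℝ (Fin d)) 1 := mem_ball_zero_iff.2 hy.2
    rw [Set.indicator_of_mem hyb]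
    rw [Real.norm_eq_abs, abs_of_nonneg (rpow_nonneg (norm_nonneg y) _)]
    exact Real.rpow_le_rpow_of_nonpos ha0 hy.1.le (neg_nonpos.mpr (Nat.cast_nonneg d))
  · rw [Set.indicator_of_notMem hy]
    simp only [norm_zero]
    exact Set.indicator_nonneg (fun _ _ => rpow_nonneg ha0.le _) y

end Aux

theorem stmt_3 (d : ℕ) (hd : 1 ≤ d) (α β lam : ℝ)
    (hα0 : 0 ≤ α) (hβ0 : 0 ≤ β) (hlam : 0 < lam) (hsum : α + β + lam < d)
    (g : EuclideanSpace ℝ (Fin d) → ℝ)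
    (hg : ∀ x, g x = if ‖x‖ < 1 then ‖x‖ ^ (-((d : ℝ) - α - lam)) else 0)
    (v : EuclideanSpace ℝ (Fin d) → ℝ)
    (hv : ∀ x, v x = ‖x‖ ^ (-β) * ∫ y, g y * ‖y‖ ^ (-α) * ‖x - y‖ ^ (-lam)) :
    ∃ c : ℝ, 0 < c ∧ ∀ x : EuclideanSpace ℝ (Fin d),
      0 < ‖x‖ → ‖x‖ < (Real.exp 1)⁻¹ →
      c * ‖x‖ ^ (-β) * Real.log (1 / ‖x‖) ≤ v x := by
  have hd0 : (0:ℝ) < d := by exact_mod_cast hd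
  have hlamd : lam < d := by linarith
  have hdl : 0 < (d:ℝ) - lam := by linarith
  have hdal : 0 < (d:ℝ) - α - lam := by linarith
  have hV : 0 < (volume (ball (0 : EuclideanSpace ℝ (Fin d)) 1)).toReal :=
    ENNReal.toReal_pos (measure_ball_pos volume 0 one_pos).ne' measure_ball_lt_top.ne
  set V := (volume (ball (0 : EuclideanSpace ℝ (Fin d)) 1)).toReal with hVdef
  have hlog2 : Real.log 2 < 1 := by
    have := Real.log_two_lt_d9; linarith
  have hlog2' : 0 ≤ Real.log 2 := Real.log_nonneg one_le_two
  refine ⟨(2/3:ℝ) ^ lam * ((d:ℝ) * V * (1 - Real.log 2)), ?_, ?_⟩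
  · have h23 : (0:ℝ) < (2/3:ℝ) ^ lam := Real.rpow_pos_of_pos (by norm_num) _
    have : 0 < (d:ℝ) * V * (1 - Real.log 2) := by
      apply mul_pos (mul_pos hd0 hV); linarith
    exact mul_pos h23 this
  intro x hx0 hx1
  set r := ‖x‖ with hr
  have hinv : (Real.exp 1)⁻¹ ≤ 1/2 := by
    rw [inv_eq_one_div]
    exact one_div_le_one_div_of_le two_pos (by have := Real.exp_one_gt_d9; linarith)
  have hr2 : r < 1/2 := lt_of_lt_of_le hx1 hinv
  have h2r0 : 0 < 2*r := by linarith
  have h2r1 : 2*r < 1 := by linarith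
  have hL1 : 1 < Real.log (1/r) := by
    rw [one_div, Real.log_inv]
    have hlt : Real.log r < Real.log ((Real.exp 1)⁻¹) := Real.log_lt_log hx0 hx1
    rw [Real.log_inv, Real.log_exp] at hlt
    linarith
  have hlog12 : Real.log (1/(2*r)) = Real.log (1/r) - Real.log 2 := by
    rw [one_div, one_div, Real.log_inv, Real.log_inv, Real.log_mul two_ne_zero hx0.ne']
    ring
  set F : EuclideanSpace ℝ (Fin d) → ℝ := fun y =>
    (if ‖y‖ < 1 then ‖y‖ ^ (-((d:ℝ) - α - lam)) else 0) * ‖y‖ ^ (-α) * ‖x - y‖ ^ (-lam)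
    with hFdef
  have hvx : v x = r ^ (-β) * ∫ y, F y := by
    rw [hv x, hFdef]
    simp only [hg]
    rfl
  have hF_nonneg : ∀ y, 0 ≤ F y := by
    intro y
    simp only [hFdef]
    apply mul_nonneg (mul_nonneg _ (Real.rpow_nonneg (norm_nonneg y) _))
      (Real.rpow_nonneg (norm_nonneg _) _)
    split_ifs
    · exact Real.rpow_nonneg (norm_nonneg y) _
    · exact le_refl 0
  have hFmeas : Measurable F := by
    simp only [hFdef]
    apply Measurable.mul (Measurable.mul _ (by fun_prop)) (by fun_prop)
    exact Measurable.ite (measurableSet_lt measurable_norm measurable_const)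
      (by fun_prop) measurable_const
  have hgbound : ∀ y : EuclideanSpace ℝ (Fin d),
      (if ‖y‖ < 1 then ‖y‖ ^ (-((d:ℝ) - α - lam)) else 0) * ‖y‖ ^ (-α)
        ≤ ‖y‖ ^ (-((d:ℝ) - lam)) := by
    intro y
    split_ifs with h1
    · rcases eq_or_lt_of_le (norm_nonneg y) with h0 | h0
      · rw [← h0, Real.zero_rpow (neg_ne_zero.mpr hdal.ne'), zero_mul]
        exact Real.rpow_nonneg (le_refl 0 |>.trans (le_of_eq rfl)) _
      · refine le_of_eq ?_
        rw [← Real.rpow_add h0]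
        congr 1
        ring
    · rw [zero_mul]
      exact Real.rpow_nonneg (norm_nonneg y) _
  have hFA : IntegrableOn F (closedBall (0 : EuclideanSpace ℝ (Fin d)) (r/2)) := by
    have hint : IntegrableOn (fun y : EuclideanSpace ℝ (Fin d) =>
        (r/2) ^ (-lam) * ‖y‖ ^ (-((d:ℝ)-lam)))
        (closedBall (0 : EuclideanSpace ℝ (Fin d)) (r/2)) := by
      apply Integrable.const_mul
      exact (aux_integrableOn_rpow_ball d (R := r/2 + 1) hdl (by linarith)).mono_set
        (closedBall_subset_ball (by linarith))
    refine hint.mono' hFmeas.aestronglyMeasurable.restrict ?_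
    rw [ae_restrict_iff' measurableSet_closedBall]
    refine Filter.Eventually.of_forall fun y hy => ?_
    rw [Real.norm_eq_abs, abs_of_nonneg (hF_nonneg y)]
    have hyr : ‖y‖ ≤ r/2 := mem_closedBall_zero_iff.1 hy
    have hxy : r/2 ≤ ‖x - y‖ := by
      have h := norm_sub_norm_le x y
      linarith
    have h2 : ‖x - y‖ ^ (-lam) ≤ (r/2) ^ (-lam) :=
      Real.rpow_le_rpow_of_nonpos (by linarith) hxy (neg_nonpos.mpr hlam.le)
    simp only [hFdef]
    calc (if ‖y‖ < 1 then ‖y‖ ^ (-((d:ℝ) - α - lam)) else 0) * ‖y‖ ^ (-α) * ‖x - y‖ ^ (-lam)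
        ≤ ‖y‖ ^ (-((d:ℝ)-lam)) * ‖x - y‖ ^ (-lam) :=
          mul_le_mul_of_nonneg_right (hgbound y) (Real.rpow_nonneg (norm_nonneg _) _)
      _ ≤ ‖y‖ ^ (-((d:ℝ)-lam)) * (r/2) ^ (-lam) :=
          mul_le_mul_of_nonneg_left h2 (Real.rpow_nonneg (norm_nonneg _) _)
      _ = (r/2) ^ (-lam) * ‖y‖ ^ (-((d:ℝ)-lam)) := mul_comm _ _
  have hFAc : IntegrableOn F (closedBall (0 : EuclideanSpace ℝ (Fin d)) (r/2))ᶜ := by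
    set K2 : EuclideanSpace ℝ (Fin d) → ℝ :=
      Set.indicator (ball (0 : EuclideanSpace ℝ (Fin d)) 2) (fun z => ‖z‖ ^ (-lam)) with hK2def
    have hK2 : Integrable K2 :=
      (aux_integrableOn_rpow_ball d (R := 2) hlam hlamd).integrable_indicator measurableSet_ball
    have hK2x : Integrable (fun y => K2 (x - y)) := hK2.comp_sub_left x
    have hK2nn : ∀ z, 0 ≤ K2 z := fun z =>
      Set.indicator_nonneg (fun _ _ => Real.rpow_nonneg (norm_nonneg _) _) z
    refine ((hK2x.const_mul ((r/2) ^ (-((d:ℝ)-lam)))).integrableOn).mono'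
      hFmeas.aestronglyMeasurable.restrict ?_
    rw [ae_restrict_iff' measurableSet_closedBall.compl]
    refine Filter.Eventually.of_forall fun y hy => ?_
    rw [Real.norm_eq_abs, abs_of_nonneg (hF_nonneg y)]
    have hyr : r/2 < ‖y‖ := by
      simp only [Set.mem_compl_iff, mem_closedBall_zero_iff, not_le] at hy
      exact hy
    by_cases h1 : ‖y‖ < 1
    · have hxyb : x - y ∈ ball (0 : EuclideanSpace ℝ (Fin d)) 2 := by
        rw [mem_ball_zero_iff]
        calc ‖x - y‖ ≤ ‖x‖ + ‖y‖ := norm_sub_le x y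
          _ < 2 := by rw [← hr]; linarith
      have hK2eq : K2 (x - y) = ‖x - y‖ ^ (-lam) := Set.indicator_of_mem hxyb _
      have hb1 : (if ‖y‖ < 1 then ‖y‖ ^ (-((d:ℝ) - α - lam)) else 0) * ‖y‖ ^ (-α)
          ≤ (r/2) ^ (-((d:ℝ)-lam)) := by
        refine le_trans (hgbound y) ?_
        exact Real.rpow_le_rpow_of_nonpos (by linarith) hyr.le (neg_nonpos.mpr hdl.le)
      simp only [hFdef]
      calc (if ‖y‖ < 1 then ‖y‖ ^ (-((d:ℝ) - α - lam)) else 0) * ‖y‖ ^ (-α) * ‖x - y‖ ^ (-lam)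
          ≤ (r/2) ^ (-((d:ℝ)-lam)) * ‖x - y‖ ^ (-lam) :=
            mul_le_mul_of_nonneg_right hb1 (Real.rpow_nonneg (norm_nonneg _) _)
        _ = (r/2) ^ (-((d:ℝ)-lam)) * K2 (x - y) := by rw [hK2eq]
    · have hFy : F y = 0 := by
        simp only [hFdef]
        rw [if_neg h1, zero_mul, zero_mul]
      rw [hFy]
      exact mul_nonneg (Real.rpow_nonneg (by linarith) _) (hK2nn _)
  have hFint : Integrable F := by
    rw [← MeasureTheory.integrableOn_univ,
      ← Set.union_compl_self (closedBall (0 : EuclideanSpace ℝ (Fin d)) (r/2))]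
    exact hFA.union hFAc
  have hpt : ∀ y : EuclideanSpace ℝ (Fin d),
      (2/3:ℝ) ^ lam * Set.indicator (Set.Ioo (2*r) 1) (fun t => t ^ (-(d:ℝ))) ‖y‖ ≤ F y := by
    intro y
    by_cases hy : ‖y‖ ∈ Set.Ioo (2*r) 1
    · rw [Set.indicator_of_mem hy]
      have hy0 : 0 < ‖y‖ := lt_trans h2r0 hy.1
      have hxyne : 0 < ‖x - y‖ := by
        rw [norm_pos_iff]
        intro h
        have hxy : x = y := sub_eq_zero.mp h
        have h1 := hy.1
        rw [← hxy, ← hr] at h1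
        linarith
      have hub : ‖x - y‖ ≤ (3/2) * ‖y‖ := by
        have h1 := norm_sub_le x y
        have h2 : r ≤ ‖y‖/2 := by linarith [hy.1]
        rw [← hr] at h1
        linarith
      have h2 : ((3/2) * ‖y‖) ^ (-lam) ≤ ‖x - y‖ ^ (-lam) :=
        Real.rpow_le_rpow_of_nonpos hxyne hub (neg_nonpos.mpr hlam.le)
      have h3 : ((3/2) * ‖y‖ : ℝ) ^ (-lam) = (2/3:ℝ) ^ lam * ‖y‖ ^ (-lam) := by
        rw [Real.mul_rpow (by norm_num) hy0.le]
        congr 1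
        rw [Real.rpow_neg (by norm_num), ← Real.inv_rpow (by norm_num)]
        norm_num
      have hgeq : (if ‖y‖ < 1 then ‖y‖ ^ (-((d:ℝ) - α - lam)) else 0) * ‖y‖ ^ (-α)
          = ‖y‖ ^ (-((d:ℝ) - lam)) := by
        rw [if_pos hy.2, ← Real.rpow_add hy0]
        congr 1
        ring
      have hmul : ‖y‖ ^ (-((d:ℝ)-lam)) * ‖y‖ ^ (-lam) = ‖y‖ ^ (-(d:ℝ)) := by
        rw [← Real.rpow_add hy0]
        congr 1
        ring
      simp only [hFdef]
      rw [hgeq]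
      calc (2/3:ℝ) ^ lam * ‖y‖ ^ (-(d:ℝ))
          = ‖y‖ ^ (-((d:ℝ)-lam)) * ((2/3:ℝ) ^ lam * ‖y‖ ^ (-lam)) := by
            rw [← hmul]; ring
        _ ≤ ‖y‖ ^ (-((d:ℝ)-lam)) * ‖x - y‖ ^ (-lam) := by
            apply mul_le_mul_of_nonneg_left _ (Real.rpow_nonneg hy0.le _)
            rw [← h3]; exact h2
    · rw [Set.indicator_of_notMem hy, mul_zero]
      exact hF_nonneg y
  have hIkey : (2/3:ℝ) ^ lam * ((d:ℝ) * V * Real.log (1/(2*r))) ≤ ∫ y, F y := by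
    have hmono := MeasureTheory.integral_mono
      ((aux_ind_integrable d h2r0).const_mul ((2/3:ℝ) ^ lam)) hFint hpt
    rwa [MeasureTheory.integral_const_mul, aux_polar_value d hd h2r0 h2r1, ← hVdef] at hmono
  have hlogineq : (1 - Real.log 2) * Real.log (1/r) ≤ Real.log (1/(2*r)) := by
    rw [hlog12]
    nlinarith [hL1, hlog2']
  have h23nn : (0:ℝ) ≤ (2/3:ℝ) ^ lam * ((d:ℝ) * V) := by positivity
  have hcL : (2/3:ℝ) ^ lam * ((d:ℝ) * V * (1 - Real.log 2)) * Real.log (1/r) ≤ ∫ y, F y := by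
    refine le_trans ?_ hIkey
    calc (2/3:ℝ) ^ lam * ((d:ℝ) * V * (1 - Real.log 2)) * Real.log (1/r)
        = ((2/3:ℝ) ^ lam * ((d:ℝ) * V)) * ((1 - Real.log 2) * Real.log (1/r)) := by ring
      _ ≤ ((2/3:ℝ) ^ lam * ((d:ℝ) * V)) * Real.log (1/(2*r)) :=
          mul_le_mul_of_nonneg_left hlogineq h23nn
      _ = (2/3:ℝ) ^ lam * ((d:ℝ) * V * Real.log (1/(2*r))) := by ring
  rw [hvx]
  have hrb : (0:ℝ) ≤ r ^ (-β) := Real.rpow_nonneg (norm_nonneg x) _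
  calc (2/3:ℝ) ^ lam * ((d:ℝ) * V * (1 - Real.log 2)) * r ^ (-β) * Real.log (1/r)
      = r ^ (-β) * ((2/3:ℝ) ^ lam * ((d:ℝ) * V * (1 - Real.log 2)) * Real.log (1/r)) := by ring
    _ ≤ r ^ (-β) * ∫ y, F y := mul_le_mul_of_nonneg_left hcL hrb
end

section
/- If p ≤ d/(d-α) (with α > 0), then the weighted Riesz potential is unbounded: there exists a nonnegative f ∈ L^p(ℝ^d) with ‖f‖_p > 0 such that (I f)(x) = +∞ for every x ≠ 0, where (I f)(x) = |x|^{-β} ∫ f(y)|y|^{-α}|x-y|^{-λ} dy. -/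
open MeasureTheory Metric Real Set Filter
open scoped ENNReal

section aux

lemma lintegral_fun_norm_addHaar' {E : Type*} [NormedAddCommGroup E] [NormedSpace ℝ E]
    [MeasurableSpace E] [BorelSpace E] [Nontrivial E] [FiniteDimensional ℝ E]
    (μ : Measure E) [μ.IsAddHaarMeasure] (g : ℝ → ℝ≥0∞) (hg : Measurable g) :
    ∫⁻ x, g ‖x‖ ∂μ = μ.toSphere Set.univ *
      ∫⁻ r in Set.Ioi (0:ℝ), ENNReal.ofReal (r ^ (Module.finrank ℝ E - 1)) * g r := by
  set n := Module.finrank ℝ E - 1 with hn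
  have hgm : Measurable fun p : sphere (0 : E) 1 × Set.Ioi (0:ℝ) => g p.2.1 :=
    (hg.comp measurable_subtype_coe).comp measurable_snd
  have h1 : ∫⁻ x, g ‖x‖ ∂μ = ∫⁻ x : ({(0:E)}ᶜ : Set E), g ‖x.1‖ ∂(μ.comap (↑)) :=
    ((lintegral_subtype_comap (measurableSet_singleton (0:E)).compl (fun x => g ‖x‖)).trans
      (by rw [restrict_compl_singleton])).symm
  have h2 := μ.measurePreserving_homeomorphUnitSphereProd.lintegral_comp
    (f := fun p : sphere (0 : E) 1 × Set.Ioi (0:ℝ) => g p.2.1) hgm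
  simp only [homeomorphUnitSphereProd_apply_snd_coe] at h2
  have h3 := lintegral_prod (μ := μ.toSphere) (ν := .volumeIoiPow n) _ hgm.aemeasurable
  have h4 : (∫⁻ r : Set.Ioi (0:ℝ), g r.1 ∂(Measure.volumeIoiPow n)) =
      ∫⁻ r in Set.Ioi (0:ℝ), ENNReal.ofReal (r ^ n) * g r := by
    have hd : Measurable fun r : Set.Ioi (0:ℝ) => ENNReal.ofReal (r.1 ^ n) :=
      (measurable_subtype_coe.pow_const n).ennreal_ofReal
    have := lintegral_withDensity_eq_lintegral_mul
      (Measure.comap Subtype.val volume) hd (hg.comp measurable_subtype_coe)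
    refine this.trans ?_
    exact lintegral_subtype_comap measurableSet_Ioi (fun r => ENNReal.ofReal (r ^ n) * g r)
  rw [h1, h2, h3]
  simp only [h4]
  rw [lintegral_const, mul_comm]

lemma hasDerivAt_log_inv {r : ℝ} (h0 : 0 < r) :
    HasDerivAt (fun t : ℝ => Real.log t⁻¹) (-r⁻¹) r := by
  have : (fun t : ℝ => Real.log t⁻¹) = fun t => -Real.log t := by
    funext t; rw [Real.log_inv]
  rw [this]
  exact (Real.hasDerivAt_log (ne_of_gt h0)).neg

lemma log_inv_pos {r : ℝ} (h0 : 0 < r) (h1 : r < 1) : 0 < Real.log r⁻¹ := by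
  rw [Real.log_inv]
  linarith [Real.log_neg h0 h1]

lemma div_aux {ε : ℝ} (hε0 : 0 < ε) (hε1 : ε < 1) :
    ∫⁻ r in Set.Ioo (0:ℝ) ε, ENNReal.ofReal (r⁻¹ * (Real.log r⁻¹)⁻¹) = ⊤ := by
  set c := ∫⁻ r in Set.Ioo (0:ℝ) ε, ENNReal.ofReal (r⁻¹ * (Real.log r⁻¹)⁻¹) with hc
  by_contra h
  have hb0 : 0 < ε/2 := by linarith
  have hb1 : ε/2 < 1 := by linarith
  have key : ∀ M : ℝ, ENNReal.ofReal M ≤ c := by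
    intro M
    have tends : Tendsto (fun a : ℝ => Real.log (Real.log a⁻¹)) (nhdsWithin 0 (Set.Ioi 0)) atTop :=
      Real.tendsto_log_atTop.comp (Real.tendsto_log_atTop.comp tendsto_inv_nhdsGT_zero)
    obtain ⟨a, haM, ha⟩ : ∃ a, M + Real.log (Real.log (ε/2)⁻¹) ≤
        Real.log (Real.log a⁻¹) ∧ a ∈ Set.Ioo (0:ℝ) (ε/2) := by
      exact ((tends.eventually (eventually_ge_atTop _)).and
        (Ioo_mem_nhdsGT_of_mem ⟨le_refl _, hb0⟩)).exists
    have ha0 : 0 < a := ha.1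
    have hab : a < ε/2 := ha.2
    have hsub : Set.Icc a (ε/2) ⊆ Set.Ioo (0:ℝ) 1 := fun t ht =>
      ⟨lt_of_lt_of_le ha0 ht.1, lt_of_le_of_lt ht.2 hb1⟩
    have hcont : ContinuousOn (fun r : ℝ => r⁻¹ * (Real.log r⁻¹)⁻¹) (Set.Icc a (ε/2)) := by
      intro t ht
      have ht0 : 0 < t := (hsub ht).1
      have ht1 : t < 1 := (hsub ht).2
      have hlne : Real.log t⁻¹ ≠ 0 := ne_of_gt (log_inv_pos ht0 ht1)
      exact (((continuousAt_inv₀ (ne_of_gt ht0)).mul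
        (((Real.continuousAt_log (by positivity)).comp
          (continuousAt_inv₀ (ne_of_gt ht0))).inv₀ hlne))).continuousWithinAt
    have hInt : IntervalIntegrable (fun r : ℝ => r⁻¹ * (Real.log r⁻¹)⁻¹) volume a (ε/2) := by
      apply ContinuousOn.intervalIntegrable
      rwa [Set.uIcc_of_le hab.le]
    have hderiv : ∀ r ∈ Set.uIcc a (ε/2),
        HasDerivAt (fun t : ℝ => -Real.log (Real.log t⁻¹)) (r⁻¹ * (Real.log r⁻¹)⁻¹) r := by
      intro r hr
      rw [Set.uIcc_of_le hab.le] at hr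
      have hr0 : 0 < r := (hsub hr).1
      have hr1 : r < 1 := (hsub hr).2
      have hlne : Real.log r⁻¹ ≠ 0 := ne_of_gt (log_inv_pos hr0 hr1)
      have := ((Real.hasDerivAt_log hlne).comp r (hasDerivAt_log_inv hr0)).neg
      refine this.congr_deriv ?_
      ring
    have hFTC := intervalIntegral.integral_eq_sub_of_hasDerivAt hderiv hInt
    have hval : M ≤ ∫ r in a..(ε/2), r⁻¹ * (Real.log r⁻¹)⁻¹ := by
      rw [hFTC]
      simp only [neg_sub_neg]
      linarith
    have hnn : 0 ≤ᵐ[volume.restrict (Set.Ioc a (ε/2))]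
        fun r : ℝ => r⁻¹ * (Real.log r⁻¹)⁻¹ := by
      filter_upwards [ae_restrict_mem measurableSet_Ioc] with t ht
      have ht0 : 0 < t := lt_of_lt_of_le ha0 ht.1.le
      have ht1 : t < 1 := lt_of_le_of_lt ht.2 hb1
      have := log_inv_pos ht0 ht1
      positivity
    calc ENNReal.ofReal M ≤ ENNReal.ofReal (∫ r in a..(ε/2), r⁻¹ * (Real.log r⁻¹)⁻¹) :=
          ENNReal.ofReal_le_ofReal hval
      _ = ENNReal.ofReal (∫ r in Set.Ioc a (ε/2), r⁻¹ * (Real.log r⁻¹)⁻¹) := by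
          rw [intervalIntegral.integral_of_le hab.le]
      _ = ∫⁻ r in Set.Ioc a (ε/2), ENNReal.ofReal (r⁻¹ * (Real.log r⁻¹)⁻¹) := by
          rw [ofReal_integral_eq_lintegral_ofReal hInt.1 hnn]
      _ ≤ c := lintegral_mono_set (fun t ht => ⟨lt_of_lt_of_le ha0 ht.1.le, by linarith [ht.2]⟩)
  have hlt : c < ⊤ := lt_top_iff_ne_top.2 h
  have := key (c.toReal + 1)
  have h2 : c < ENNReal.ofReal (c.toReal + 1) := by
    conv_lhs => rw [← ENNReal.ofReal_toReal (ne_of_lt hlt)]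
    exact ENNReal.ofReal_lt_ofReal_iff_of_nonneg ENNReal.toReal_nonneg |>.2 (by linarith)
  exact absurd this (not_le.2 h2)

lemma int_aux {p : ℝ} (hp : 1 < p) :
    IntegrableOn (fun r : ℝ => r⁻¹ * (Real.log r⁻¹) ^ (-p)) (Set.Ioo (0:ℝ) (1/2)) volume := by
  set g : ℝ → ℝ := fun t => (p-1)⁻¹ * (Real.log t⁻¹) ^ (1-p) with hg
  have hp1 : p - 1 ≠ 0 := by intro h; exact absurd (by linarith : p = 1) (ne_of_gt hp)
  have hcont : ContinuousOn g (Set.Icc (0:ℝ) (1/2)) := by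
    intro t ht
    rcases eq_or_lt_of_le ht.1 with h0 | h0
    · subst h0
      rw [← continuousWithinAt_diff_self]
      have t1 : Tendsto (fun t : ℝ => Real.log t⁻¹) (nhdsWithin 0 (Set.Ioi 0)) atTop :=
        Real.tendsto_log_atTop.comp tendsto_inv_nhdsGT_zero
      have t2 : Tendsto (fun x : ℝ => x ^ (1-p)) atTop (nhds 0) := by
        have := tendsto_rpow_neg_atTop (by linarith : (0:ℝ) < p - 1)
        simpa [neg_sub] using this
      have t3 : Tendsto g (nhdsWithin 0 (Set.Ioi 0)) (nhds ((p-1)⁻¹ * 0)) :=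
        ((t2.comp t1).const_mul ((p-1)⁻¹))
      have hne' : (1:ℝ) - p ≠ 0 := by intro hz; exact hp1 (by linarith)
      have hg0 : g 0 = 0 := by
        show (p - 1)⁻¹ * Real.log (0:ℝ)⁻¹ ^ (1 - p) = 0
        rw [inv_zero, Real.log_zero, Real.zero_rpow hne', mul_zero]
      have hsub2 : Set.Icc (0:ℝ) (1/2) \ {0} ⊆ Set.Ioi 0 := by
        intro y hy
        rcases hy with ⟨hy1, hy2⟩
        exact lt_of_le_of_ne hy1.1 (fun hh => hy2 hh.symm)
      have : Tendsto g (nhdsWithin 0 (Set.Icc (0:ℝ) (1/2) \ {0})) (nhds (g 0)) := by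
        rw [hg0]
        exact (by simpa using t3 : Tendsto g (nhdsWithin 0 (Set.Ioi 0)) (nhds 0)).mono_left
          (nhdsWithin_mono _ hsub2)
      exact this
    · have ht1 : t < 1 := lt_of_le_of_lt ht.2 (by norm_num)
      have hlne : Real.log t⁻¹ ≠ 0 := ne_of_gt (log_inv_pos h0 ht1)
      have c1 : ContinuousAt (fun t : ℝ => Real.log t⁻¹) t :=
        (Real.continuousAt_log (x := t⁻¹) (by positivity)).comp (continuousAt_inv₀ (ne_of_gt h0))
      have c2 : ContinuousAt (fun t : ℝ => (Real.log t⁻¹) ^ (1-p)) t :=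
        c1.rpow_const (Or.inl hlne)
      exact ((continuousAt_const.mul c2) : ContinuousAt g _).continuousWithinAt
  have hderiv : ∀ t ∈ Set.Ioo (0:ℝ) (1/2),
      HasDerivAt g (t⁻¹ * (Real.log t⁻¹) ^ (-p)) t := by
    intro t ht
    have ht0 : 0 < t := ht.1
    have ht1 : t < 1 := lt_trans ht.2 (by norm_num)
    have hlne : Real.log t⁻¹ ≠ 0 := ne_of_gt (log_inv_pos ht0 ht1)
    have hin := (hasDerivAt_log_inv ht0).rpow_const (p := 1-p) (Or.inl hlne)
    have := hin.const_mul ((p-1)⁻¹)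
    refine this.congr_deriv ?_
    symm
    have he : 1 - p - 1 = -p := by ring
    rw [he]
    field_simp
    ring
  have hpos : ∀ t ∈ Set.Ioo (0:ℝ) (1/2), 0 ≤ t⁻¹ * (Real.log t⁻¹) ^ (-p) := by
    intro t ht
    have ht0 : (0:ℝ) < t := ht.1
    have hl := log_inv_pos ht0 (lt_trans ht.2 (by norm_num))
    positivity
  exact (intervalIntegral.integrableOn_deriv_of_nonneg hcont hderiv hpos).mono_set
    Set.Ioo_subset_Ioc_self

end aux

/-- If `p ≤ d/(d-α)` the weighted Riesz potential is unbounded: there is a nonnegative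
`f ∈ L^p` with positive norm whose potential is `+∞` at every `x ≠ 0`. -/
theorem stmt_9 (d : ℕ) (hd : 1 ≤ d) (α β lam p : ℝ)
    (hα : 0 < α) (hβ0 : 0 ≤ β) (hlam : 0 < lam) (hsum : α + β + lam < d)
    (hp1 : 1 ≤ p) (hp : p ≤ (d : ℝ) / (d - α)) :
    ∃ f : EuclideanSpace ℝ (Fin d) → ℝ, (∀ x, 0 ≤ f x) ∧
      MemLp f (ENNReal.ofReal p) volume ∧
      eLpNorm f (ENNReal.ofReal p) volume ≠ 0 ∧
      ∀ x : EuclideanSpace ℝ (Fin d), x ≠ 0 →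
        ∫⁻ y, ENNReal.ofReal (f y * ‖y‖ ^ (-α) * ‖x - y‖ ^ (-lam)) = ⊤ := by
  classical
  set E := EuclideanSpace ℝ (Fin d) with hE
  haveI : Nonempty (Fin d) := ⟨⟨0, hd⟩⟩
  have hfr : Module.finrank ℝ E = d := finrank_euclideanSpace_fin
  haveI : Nontrivial E := by
    rw [hE]; infer_instance
  have hdα : α < d := by linarith
  have hdα0 : (0:ℝ) < (d:ℝ) - α := by linarith
  have hp0 : (0:ℝ) < p := by linarith
  -- the radial profile
  set g1 : ℝ → ℝ := fun r =>
    if r ∈ Set.Ioo (0:ℝ) (1/2) then r ^ (α - (d:ℝ)) * (Real.log r⁻¹)⁻¹ else 0 with hg1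
  have hg1m : Measurable g1 := by
    apply Measurable.ite measurableSet_Ioo
    · exact (measurable_id.pow_const _).mul (Real.measurable_log.comp measurable_inv).inv
    · exact measurable_const
  have hg1nn : ∀ r, 0 ≤ g1 r := by
    intro r
    simp only [hg1]
    by_cases hr : r ∈ Set.Ioo (0:ℝ) (1/2)
    · rw [if_pos hr]
      have h0 : (0:ℝ) < r := hr.1
      have hl := log_inv_pos h0 (lt_trans hr.2 (by norm_num))
      positivity
    · rw [if_neg hr]
  have hg1pos : ∀ r ∈ Set.Ioo (0:ℝ) (1/2), 0 < g1 r := by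
    intro r hr
    simp only [hg1]; rw [if_pos hr]
    have h0 : (0:ℝ) < r := hr.1
    have hl := log_inv_pos h0 (lt_trans hr.2 (by norm_num))
    positivity
  set f : E → ℝ := fun y => g1 ‖y‖ with hf
  have hfm : Measurable f := hg1m.comp measurable_norm
  have hfnn : ∀ y, 0 ≤ f y := fun y => hg1nn _
  have hq0 : (ENNReal.ofReal p) ≠ 0 := by
    simp only [ne_eq, ENNReal.ofReal_eq_zero, not_le]; linarith
  have hqt : (ENNReal.ofReal p) ≠ ⊤ := ENNReal.ofReal_ne_top
  -- key finiteness of ∫ |f|^p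
  have hcast : ∀ r : ℝ, 0 ≤ r → r ^ (d - 1 : ℕ) = r ^ ((d:ℝ) - 1) := by
    intro r hr
    rw [← Real.rpow_natCast r (d-1), Nat.cast_sub hd, Nat.cast_one]
  set g2 : ℝ → ℝ≥0∞ := fun r => ENNReal.ofReal ((g1 r) ^ p) with hg2
  have hg2m : Measurable g2 := by
    apply Measurable.ennreal_ofReal
    fun_prop
  have C0 : (volume : Measure E).toSphere Set.univ ≠ 0 := by
    rw [Measure.toSphere_apply_univ]
    apply mul_ne_zero
    · simp only [ne_eq, Nat.cast_eq_zero]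
      rw [hfr]; omega
    · exact (measure_ball_pos volume (0:E) one_pos).ne'
  have Ct : (volume : Measure E).toSphere Set.univ ≠ ⊤ := measure_ne_top _ _
  have hIoo_sub : Set.Ioo (0:ℝ) (1/2) ⊆ Set.Ioi 0 := Set.Ioo_subset_Ioi_self
  -- the 1-d bound
  have hbound : ∃ h0 : ℝ → ℝ, IntegrableOn h0 (Set.Ioo (0:ℝ) (1/2)) volume ∧
      ∀ r ∈ Set.Ioo (0:ℝ) (1/2),
        r ^ ((d:ℝ)-1) * (g1 r) ^ p ≤ h0 r := by
    have halg : ∀ r ∈ Set.Ioo (0:ℝ) (1/2), r ^ ((d:ℝ)-1) * (g1 r) ^ p =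
        r ^ ((d:ℝ)-1 + (α-(d:ℝ))*p) * (Real.log r⁻¹) ^ (-p) := by
      intro r hr
      have hr0 : (0:ℝ) < r := hr.1
      have hl := log_inv_pos hr0 (lt_trans hr.2 (by norm_num))
      have hgr : g1 r = r ^ (α - (d:ℝ)) * (Real.log r⁻¹)⁻¹ := by
        simp only [hg1]; rw [if_pos hr]
      rw [hgr, Real.mul_rpow (Real.rpow_nonneg hr0.le _) (by positivity),
        ← Real.rpow_mul hr0.le, Real.inv_rpow hl.le,
        ← Real.rpow_neg hl.le, Real.rpow_add hr0]
      ring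
    rcases lt_or_eq_of_le hp with hplt | hpeq
    · -- strict case
      set e := (d:ℝ)-1 + (α-(d:ℝ))*p with he
      have hegt : -1 < e := by
        have : p * ((d:ℝ) - α) < d := (lt_div_iff₀ hdα0).1 hplt
        rw [he]; nlinarith
      refine ⟨fun r => (Real.log 2)^(-p) * r ^ e, ?_, ?_⟩
      · apply Integrable.const_mul
        exact ((intervalIntegral.intervalIntegrable_rpow' hegt (a := 0) (b := 1/2)).1).mono_set
          Set.Ioo_subset_Ioc_self
      · intro r hr
        have hr0 : (0:ℝ) < r := hr.1
        have h2r : (2:ℝ) ≤ r⁻¹ := by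
          rw [show (2:ℝ) = (2⁻¹:ℝ)⁻¹ by norm_num]
          apply inv_anti₀ hr0
          linarith [hr.2]
        have hlog2 : (0:ℝ) < Real.log 2 := Real.log_pos (by norm_num)
        have hlogle : Real.log 2 ≤ Real.log r⁻¹ := Real.log_le_log (by norm_num) h2r
        have hble : Real.log r⁻¹ ^ (-p) ≤ Real.log 2 ^ (-p) :=
          Real.rpow_le_rpow_of_nonpos hlog2 hlogle (by linarith)
        show r ^ ((d:ℝ)-1) * (g1 r) ^ p ≤ Real.log 2 ^ (-p) * r ^ e
        rw [halg r hr, mul_comm (Real.log 2 ^ (-p)) _]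
        exact mul_le_mul_of_nonneg_left hble (Real.rpow_nonneg hr0.le _)
    · -- equality case
      have hpd : p * ((d:ℝ) - α) = d := by
        rw [hpeq]; field_simp
      have hee : (d:ℝ)-1 + (α-(d:ℝ))*p = -1 := by nlinarith
      have hp1' : 1 < p := by
        rw [hpeq, lt_div_iff₀ hdα0]
        linarith
      refine ⟨fun r => r⁻¹ * (Real.log r⁻¹) ^ (-p), int_aux hp1', ?_⟩
      intro r hr
      show r ^ ((d:ℝ)-1) * (g1 r) ^ p ≤ r⁻¹ * (Real.log r⁻¹) ^ (-p)
      rw [halg r hr, hee, Real.rpow_neg_one]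
  obtain ⟨h0, h0int, h0le⟩ := hbound
  have hmem : MemLp f (ENNReal.ofReal p) volume := by
    refine ⟨hfm.aestronglyMeasurable, ?_⟩
    rw [eLpNorm_eq_lintegral_rpow_enorm_toReal hq0 hqt]
    rw [ENNReal.toReal_ofReal hp0.le]
    apply ENNReal.rpow_lt_top_of_nonneg (by positivity)
    apply ne_of_lt
    have hrw : ∀ x : E, ‖f x‖ₑ ^ p = g2 ‖x‖ := by
      intro x
      rw [Real.enorm_eq_ofReal (hfnn x), hg2]
      exact ENNReal.ofReal_rpow_of_nonneg (hfnn x) hp0.le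
    calc ∫⁻ x : E, ‖f x‖ₑ ^ p = ∫⁻ x : E, g2 ‖x‖ := by
          exact lintegral_congr hrw
      _ = (volume : Measure E).toSphere Set.univ *
            ∫⁻ r in Set.Ioi (0:ℝ), ENNReal.ofReal (r ^ (Module.finrank ℝ E - 1)) * g2 r :=
          lintegral_fun_norm_addHaar' volume g2 hg2m
      _ < ⊤ := by
          apply ENNReal.mul_lt_top (lt_top_iff_ne_top.2 Ct)
          have hind : ∀ r : ℝ, ENNReal.ofReal (r ^ (Module.finrank ℝ E - 1)) * g2 r =
              (Set.Ioo (0:ℝ) (1/2)).indicator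
                (fun r => ENNReal.ofReal (r ^ (Module.finrank ℝ E - 1)) * g2 r) r := by
            intro r
            by_cases hr : r ∈ Set.Ioo (0:ℝ) (1/2)
            · rw [Set.indicator_of_mem hr]
            · rw [Set.indicator_of_notMem hr]
              have hg1r : g1 r = 0 := by simp only [hg1]; rw [if_neg hr]
              simp only [hg2, hg1r, Real.zero_rpow (ne_of_gt hp0), ENNReal.ofReal_zero, mul_zero]
          calc ∫⁻ r in Set.Ioi (0:ℝ), ENNReal.ofReal (r ^ (Module.finrank ℝ E - 1)) * g2 r
              = ∫⁻ r in Set.Ioi (0:ℝ), (Set.Ioo (0:ℝ) (1/2)).indicator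
                  (fun r => ENNReal.ofReal (r ^ (Module.finrank ℝ E - 1)) * g2 r) r :=
                lintegral_congr hind
            _ = ∫⁻ r in Set.Ioo (0:ℝ) (1/2) ∩ Set.Ioi 0,
                  ENNReal.ofReal (r ^ (Module.finrank ℝ E - 1)) * g2 r := by
                rw [lintegral_indicator measurableSet_Ioo,
                  Measure.restrict_restrict measurableSet_Ioo]
            _ = ∫⁻ r in Set.Ioo (0:ℝ) (1/2),
                  ENNReal.ofReal (r ^ (Module.finrank ℝ E - 1)) * g2 r := by
                rw [Set.inter_eq_left.2 hIoo_sub]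
            _ ≤ ∫⁻ r in Set.Ioo (0:ℝ) (1/2), ENNReal.ofReal (h0 r) := by
                apply setLIntegral_mono' measurableSet_Ioo
                intro r hr
                have hr0 : (0:ℝ) < r := hr.1
                rw [hg2, ← ENNReal.ofReal_mul (by positivity), hfr]
                apply ENNReal.ofReal_le_ofReal
                rw [hcast r hr0.le]
                exact h0le r hr
            _ < ⊤ := h0int.lintegral_lt_top
  refine ⟨f, hfnn, hmem, ?_, ?_⟩
  · -- nonzero norm
    intro hzero
    rw [eLpNorm_eq_zero_iff hfm.aestronglyMeasurable hq0] at hzero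
    set U : Set E := {y : E | 3/8 < ‖y‖ ∧ ‖y‖ < 1/2} with hU
    have hUopen : IsOpen U := by
      have : U = (fun y : E => ‖y‖) ⁻¹' (Set.Ioo (3/8) (1/2)) := rfl
      rw [this]
      exact isOpen_Ioo.preimage continuous_norm
    have hUne : U.Nonempty := by
      refine ⟨EuclideanSpace.single ⟨0, hd⟩ ((7/16 : ℝ)), ?_⟩
      constructor <;>
        rw [EuclideanSpace.norm_single] <;> rw [Real.norm_eq_abs, abs_of_pos (by norm_num)] <;>
          norm_num
    have hUpos : 0 < volume U := hUopen.measure_pos volume hUne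
    have hsub : U ⊆ {y : E | ¬ f y = 0} := by
      intro y hy
      have : ‖y‖ ∈ Set.Ioo (0:ℝ) (1/2) := ⟨by linarith [hy.1], hy.2⟩
      exact fun hzero' => absurd hzero' (ne_of_gt (hg1pos _ this))
    rw [Filter.EventuallyEq, ae_iff] at hzero
    simp only [Pi.zero_apply] at hzero
    have := measure_mono_null hsub hzero
    rw [this] at hUpos
    exact lt_irrefl _ hUpos
  · -- divergence
    intro x hx
    have hxn : 0 < ‖x‖ := norm_pos_iff.2 hx
    set ε : ℝ := min (1/4) (‖x‖/2) with hε
    have hε0 : 0 < ε := lt_min (by norm_num) (by positivity)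
    have hε14 : ε ≤ 1/4 := min_le_left _ _
    have hεx : ε ≤ ‖x‖/2 := min_le_right _ _
    set R : ℝ := ‖x‖ + 1 with hR
    have hR0 : 0 < R := by positivity
    set c : ℝ := R ^ (-lam) with hcdef
    have hc0 : 0 < c := Real.rpow_pos_of_pos hR0 _
    set g3 : ℝ → ℝ≥0∞ := fun r => (Set.Ioo (0:ℝ) ε).indicator
      (fun r => ENNReal.ofReal (r ^ (α - (d:ℝ)) * (Real.log r⁻¹)⁻¹ * r ^ (-α) * c)) r with hg3
    have hg3m : Measurable g3 := by
      apply Measurable.indicator _ measurableSet_Ioo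
      apply Measurable.ennreal_ofReal
      exact (((measurable_id.pow_const _).mul
        (Real.measurable_log.comp measurable_inv).inv).mul
          (measurable_id.pow_const _)).mul_const c
    have hmono : ∀ y : E, g3 ‖y‖ ≤ ENNReal.ofReal (f y * ‖y‖ ^ (-α) * ‖x - y‖ ^ (-lam)) := by
      intro y
      by_cases hy : ‖y‖ ∈ Set.Ioo (0:ℝ) ε
      · show (Set.Ioo (0:ℝ) ε).indicator
            (fun r => ENNReal.ofReal (r ^ (α - (d:ℝ)) * (Real.log r⁻¹)⁻¹ * r ^ (-α) * c)) ‖y‖ ≤ _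
        rw [Set.indicator_of_mem hy]
        apply ENNReal.ofReal_le_ofReal
        have hy12 : ‖y‖ ∈ Set.Ioo (0:ℝ) (1/2) := ⟨hy.1, by linarith [hy.2]⟩
        have hfy : f y = ‖y‖ ^ (α - (d:ℝ)) * (Real.log ‖y‖⁻¹)⁻¹ := by
          simp only [hf, hg1]; rw [if_pos hy12]
        have hxy0 : 0 < ‖x - y‖ := by
          rw [norm_sub_pos_iff]
          intro hxy
          have hxx : ‖x‖ = ‖y‖ := by rw [hxy]
          have h1 := hy.2
          rw [hxx] at hεx
          linarith
        have hxyR : ‖x - y‖ ≤ R := by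
          calc ‖x - y‖ ≤ ‖x‖ + ‖y‖ := norm_sub_le _ _
            _ ≤ R := by rw [hR]; linarith [hy.2, hε14]
        have hcle : c ≤ ‖x - y‖ ^ (-lam) :=
          Real.rpow_le_rpow_of_nonpos hxy0 hxyR (by linarith)
        rw [hfy]
        have hl := log_inv_pos hy12.1 (lt_trans hy12.2 (by norm_num))
        have hA : 0 ≤ ‖y‖ ^ (α - (d:ℝ)) * (Real.log ‖y‖⁻¹)⁻¹ * ‖y‖ ^ (-α) := by
          have := hy12.1
          positivity
        calc ‖y‖ ^ (α - (d:ℝ)) * (Real.log ‖y‖⁻¹)⁻¹ * ‖y‖ ^ (-α) * c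
            ≤ ‖y‖ ^ (α - (d:ℝ)) * (Real.log ‖y‖⁻¹)⁻¹ * ‖y‖ ^ (-α) * (‖x - y‖ ^ (-lam)) :=
              mul_le_mul_of_nonneg_left hcle hA
          _ = ‖y‖ ^ (α - (d:ℝ)) * (Real.log ‖y‖⁻¹)⁻¹ * ‖y‖ ^ (-α) * ‖x - y‖ ^ (-lam) := rfl
      · show (Set.Ioo (0:ℝ) ε).indicator
            (fun r => ENNReal.ofReal (r ^ (α - (d:ℝ)) * (Real.log r⁻¹)⁻¹ * r ^ (-α) * c)) ‖y‖ ≤ _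
        rw [Set.indicator_of_notMem hy]
        exact zero_le
    refine top_le_iff.1 ?_
    calc (⊤ : ℝ≥0∞) = (volume : Measure E).toSphere Set.univ *
          ∫⁻ r in Set.Ioi (0:ℝ), ENNReal.ofReal (r ^ (Module.finrank ℝ E - 1)) * g3 r := by
          -- show the RHS is ⊤
          have hinner : (∫⁻ r in Set.Ioi (0:ℝ),
              ENNReal.ofReal (r ^ (Module.finrank ℝ E - 1)) * g3 r) = ⊤ := by
            refine top_le_iff.1 ?_
            calc (⊤:ℝ≥0∞) = ∫⁻ r in Set.Ioo (0:ℝ) ε,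
                  ENNReal.ofReal c * ENNReal.ofReal (r⁻¹ * (Real.log r⁻¹)⁻¹) := by
                  rw [lintegral_const_mul' _ _ ENNReal.ofReal_ne_top, div_aux hε0 (by linarith),
                    ENNReal.mul_top (by simp [ENNReal.ofReal_eq_zero]; linarith)]
              _ = ∫⁻ r in Set.Ioo (0:ℝ) ε,
                  ENNReal.ofReal (r ^ (Module.finrank ℝ E - 1)) * g3 r := by
                  apply setLIntegral_congr_fun measurableSet_Ioo
                  intro r hr
                  have hr0 : (0:ℝ) < r := hr.1
                  have hr1 : r < 1 := by linarith [hr.2, hε14]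
                  have hl := log_inv_pos hr0 hr1
                  show ENNReal.ofReal c * ENNReal.ofReal (r⁻¹ * (Real.log r⁻¹)⁻¹) =
                    ENNReal.ofReal (r ^ (Module.finrank ℝ E - 1)) *
                      (Set.Ioo (0:ℝ) ε).indicator (fun r =>
                        ENNReal.ofReal (r ^ (α - (d:ℝ)) * (Real.log r⁻¹)⁻¹ * r ^ (-α) * c)) r
                  rw [Set.indicator_of_mem hr, hfr, hcast r hr0.le,
                    ← ENNReal.ofReal_mul (Real.rpow_nonneg hr0.le _),
                    ← ENNReal.ofReal_mul hc0.le]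
                  congr 1
                  have hpow : r ^ ((d:ℝ)-1) * (r ^ (α - (d:ℝ)) * (Real.log r⁻¹)⁻¹ * r ^ (-α) * c)
                      = c * (r⁻¹ * (Real.log r⁻¹)⁻¹) := by
                    have : r ^ ((d:ℝ)-1) * r ^ (α - (d:ℝ)) * r ^ (-α) = r⁻¹ := by
                      rw [← Real.rpow_add hr0, ← Real.rpow_add hr0,
                        show ((d:ℝ)-1) + (α - (d:ℝ)) + -α = -1 by ring, Real.rpow_neg_one]
                    calc r ^ ((d:ℝ)-1) * (r ^ (α - (d:ℝ)) * (Real.log r⁻¹)⁻¹ * r ^ (-α) * c)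
                        = (r ^ ((d:ℝ)-1) * r ^ (α - (d:ℝ)) * r ^ (-α)) *
                            ((Real.log r⁻¹)⁻¹ * c) := by ring
                      _ = r⁻¹ * ((Real.log r⁻¹)⁻¹ * c) := by rw [this]
                      _ = c * (r⁻¹ * (Real.log r⁻¹)⁻¹) := by ring
                  rw [hpow]
              _ ≤ ∫⁻ r in Set.Ioi (0:ℝ),
                  ENNReal.ofReal (r ^ (Module.finrank ℝ E - 1)) * g3 r :=
                  lintegral_mono_set (fun t ht => ht.1)
          rw [hinner, ENNReal.mul_top C0]
      _ = ∫⁻ y : E, g3 ‖y‖ := (lintegral_fun_norm_addHaar' volume g3 hg3m).symm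
      _ ≤ ∫⁻ y : E, ENNReal.ofReal (f y * ‖y‖ ^ (-α) * ‖x - y‖ ^ (-lam)) :=
          lintegral_mono hmono
end
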